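/- arXiv:2010.10282 — 4 statements merged into one kernel-verified Lean document; each statement's English description precedes it below -/
import Mathlib

section
/- Let α > 2 and T > 0, and define ρ(T,α) := T^{2/α} · ∫_{T^{−2/α}}^∞ 1/(1+u^{α/2}) du. Let K ≥ 1 be an integer, and for j = 1,…,K let λ_j > 0, P_j > 0, w_j := P_j^{1/α}, q_j := λ_j·w_j² / ∑_{k=1}^K λ_k·w_k², and let p_j ∈ [0,1]. Fix an index i and a real r > 0, and set λ̄_i := λ_i/q_i. Then ∑_{j=1}^K 2π·p_j·λ_j · ∫_{r·w_j/w_i}^∞ (1 − 1/(1 + T·(r·w_j/w_i)^α·v^{−α}))·v dv = π·r²·λ̄_i·(∑_{j=1}^K p_j·q_j)·ρ(T,α). -/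
open Real MeasureTheory Set Filter

lemma key_int (α T : ℝ) (hα : 2 < α) (hT : 0 < T) {a : ℝ} (ha : 0 < a) :
    ∫ v in Set.Ioi a, (1 - 1 / (1 + T * a ^ α * v ^ (-α))) * v
      = a ^ 2 / 2 * (T ^ (2 / α) * ∫ u in Set.Ioi (T ^ (-2 / α)), 1 / (1 + u ^ (α / 2))) := by
  have hα0 : (0:ℝ) < α := by linarith
  set c : ℝ := a * T ^ (1 / α) with hc_def
  have hc : 0 < c := mul_pos ha (rpow_pos_of_pos hT _)
  set u0 : ℝ := T ^ (-2 / α) with hu0_def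
  have hu0 : 0 < u0 := rpow_pos_of_pos hT _
  set g : ℝ → ℝ := fun v => (1 - 1 / (1 + T * a ^ α * v ^ (-α))) * v with hg_def
  set f : ℝ → ℝ := fun u => c * Real.sqrt u with hf_def
  set f' : ℝ → ℝ := fun u => c * (1 / (2 * Real.sqrt u)) with hf'_def
  have hfu0 : f u0 = a := by
    simp only [hf_def, hu0_def, hc_def]
    rw [Real.sqrt_eq_rpow, ← Real.rpow_mul hT.le, mul_assoc, ← Real.rpow_add hT]
    have : 1 / α + -2 / α * (1 / 2) = 0 := by field_simp; ring
    rw [this, Real.rpow_zero, mul_one]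
  -- pointwise identity on (u0, ∞)
  have heq : ∀ u : ℝ, 0 < u → (g ∘ f) u * f' u = c ^ 2 / 2 * (1 / (1 + u ^ (α / 2))) := by
    intro u hu'
    have hsu : 0 < Real.sqrt u := Real.sqrt_pos.mpr hu'
    have hfu : 0 < f u := mul_pos hc hsu
    have h1 : (f u) ^ (-α) = c ^ (-α) * u ^ (-(α / 2)) := by
      simp only [hf_def]
      rw [Real.mul_rpow hc.le hsu.le, Real.sqrt_eq_rpow, ← Real.rpow_mul hu'.le]
      ring_nf
    have hca : c ^ (-α) = a ^ (-α) * T⁻¹ := by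
      rw [hc_def, Real.mul_rpow ha.le (rpow_pos_of_pos hT _).le, ← Real.rpow_mul hT.le]
      have : 1 / α * -α = -1 := by field_simp
      rw [this, Real.rpow_neg_one]
    have h2 : T * a ^ α * (f u) ^ (-α) = u ^ (-(α / 2)) := by
      rw [h1, hca, Real.rpow_neg ha.le]
      have haa : a ^ α ≠ 0 := (rpow_pos_of_pos ha α).ne'
      field_simp
    have h3 : u ^ (-(α / 2)) = (u ^ (α / 2))⁻¹ := Real.rpow_neg hu'.le _
    have hup : 0 < u ^ (α / 2) := rpow_pos_of_pos hu' _
    have hden : (0:ℝ) < 1 + u ^ (α / 2) := by linarith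
    simp only [Function.comp, hg_def, hf'_def]
    rw [show (1 - 1 / (1 + T * a ^ α * (c * Real.sqrt u) ^ (-α))) = 1 - 1 / (1 + T * a ^ α * (f u) ^ (-α)) from rfl,
      h2, h3]
    have h4 : 1 + (u ^ (α / 2))⁻¹ = (1 + u ^ (α / 2)) / u ^ (α / 2) := by
      field_simp
      ring
    rw [h4]
    field_simp
    ring
  -- continuity of g on positives
  have hg_cont : ContinuousOn g (Set.Ioi (0:ℝ)) := by
    apply ContinuousOn.mul _ continuousOn_id
    apply ContinuousOn.sub continuousOn_const
    apply ContinuousOn.div continuousOn_const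
    · exact continuousOn_const.add (continuousOn_const.mul
        (fun v hv => (Real.continuousAt_rpow_const v (-α) (Or.inl (ne_of_gt hv))).continuousWithinAt))
    · intro v hv
      have : 0 < T * a ^ α * v ^ (-α) :=
        mul_pos (mul_pos hT (rpow_pos_of_pos ha _)) (rpow_pos_of_pos hv _)
      linarith
  -- g integrable on Ici a
  have hg_int : IntegrableOn g (Set.Ici a) := by
    have hdom : IntegrableOn (fun v : ℝ => T * a ^ α * v ^ (1 - α)) (Set.Ici a) := by
      rw [integrableOn_Ici_iff_integrableOn_Ioi]
      exact (integrableOn_Ioi_rpow_of_lt (by linarith) ha).const_mul _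
    apply Integrable.mono' hdom
    · exact (hg_cont.mono (fun v (hv : v ∈ Set.Ici a) => lt_of_lt_of_le ha hv)).aestronglyMeasurable
        measurableSet_Ici
    · filter_upwards [ae_restrict_mem measurableSet_Ici] with v hv
      have hv' : 0 < v := lt_of_lt_of_le ha hv
      have hx : 0 < T * a ^ α * v ^ (-α) :=
        mul_pos (mul_pos hT (rpow_pos_of_pos ha _)) (rpow_pos_of_pos hv' _)
      have hfrac0 : 0 ≤ 1 - 1 / (1 + T * a ^ α * v ^ (-α)) := by
        have h1 : 1 / (1 + T * a ^ α * v ^ (-α)) ≤ 1 := by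
          rw [div_le_one (by linarith)]; linarith
        linarith
      have hfrac1 : 1 - 1 / (1 + T * a ^ α * v ^ (-α)) ≤ T * a ^ α * v ^ (-α) := by
        have he : 1 - 1 / (1 + T * a ^ α * v ^ (-α)) = (T * a ^ α * v ^ (-α)) / (1 + T * a ^ α * v ^ (-α)) := by
          field_simp
          ring
        rw [he]
        exact div_le_self hx.le (by linarith)
      have hgv : g v = (1 - 1 / (1 + T * a ^ α * v ^ (-α))) * v := rfl
      rw [Real.norm_eq_abs, hgv, abs_of_nonneg (mul_nonneg hfrac0 hv'.le)]
      calc (1 - 1 / (1 + T * a ^ α * v ^ (-α))) * v ≤ T * a ^ α * v ^ (-α) * v :=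
            mul_le_mul_of_nonneg_right hfrac1 hv'.le
        _ = T * a ^ α * v ^ (1 - α) := by
            have hv1 : v ^ (-α) * v = v ^ (1 - α) := by
              rw [show (1:ℝ) - α = -α + 1 by ring, Real.rpow_add hv', Real.rpow_one]
            rw [mul_assoc (T * a ^ α), hv1]
  -- the u-integrand integrable on Ici u0
  have hh_int : IntegrableOn (fun u : ℝ => c ^ 2 / 2 * (1 / (1 + u ^ (α / 2)))) (Set.Ici u0) := by
    have hdom : IntegrableOn (fun u : ℝ => u ^ (-(α / 2))) (Set.Ici u0) := by
      rw [integrableOn_Ici_iff_integrableOn_Ioi]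
      exact integrableOn_Ioi_rpow_of_lt (by linarith) hu0
    apply Integrable.mono' (hdom.const_mul (c ^ 2 / 2))
    · apply ContinuousOn.aestronglyMeasurable _ measurableSet_Ici
      apply ContinuousOn.mul continuousOn_const
      apply ContinuousOn.div continuousOn_const
      · exact continuousOn_const.add (fun u hu =>
          (Real.continuousAt_rpow_const u (α/2) (Or.inl (ne_of_gt (lt_of_lt_of_le hu0 hu)))).continuousWithinAt)
      · intro u hu
        have : 0 < u ^ (α / 2) := rpow_pos_of_pos (lt_of_lt_of_le hu0 hu) _
        linarith
    · filter_upwards [ae_restrict_mem measurableSet_Ici] with u hu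
      have hu' : 0 < u := lt_of_lt_of_le hu0 hu
      have hup : 0 < u ^ (α / 2) := rpow_pos_of_pos hu' _
      rw [Real.norm_eq_abs, abs_of_nonneg (by positivity)]
      have : 1 / (1 + u ^ (α / 2)) ≤ u ^ (-(α / 2)) := by
        rw [Real.rpow_neg hu'.le, div_le_iff₀ (by linarith), inv_mul_eq_div, le_div_iff₀ hup]
        nlinarith
      have hc2 : (0:ℝ) ≤ c ^ 2 / 2 := by positivity
      calc c ^ 2 / 2 * (1 / (1 + u ^ (α / 2))) ≤ c ^ 2 / 2 * u ^ (-(α / 2)) :=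
            mul_le_mul_of_nonneg_left this hc2
        _ = c ^ 2 / 2 * u ^ (-(α / 2)) := rfl
  -- change of variables
  have hcov := integral_comp_mul_deriv_Ioi (f := f) (f' := f') (g := g) (a := u0)
    (by
      apply ContinuousOn.mul continuousOn_const
      exact Real.continuous_sqrt.continuousOn)
    (by
      have h2 : Tendsto (fun u : ℝ => c * Real.sqrt u) atTop atTop := by
        apply Tendsto.const_mul_atTop hc
        apply tendsto_atTop_atTop.mpr
        intro b
        exact ⟨b ^ 2, fun x hx => by
          calc b ≤ Real.sqrt (b ^ 2) := by
                rw [Real.sqrt_sq_eq_abs]; exact le_abs_self b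
            _ ≤ Real.sqrt x := Real.sqrt_le_sqrt hx⟩
      exact h2)
    (fun x hx => by
      have hx' : 0 < x := lt_trans hu0 hx
      exact ((Real.hasDerivAt_sqrt hx'.ne').const_mul c).hasDerivWithinAt)
    (by
      apply hg_cont.mono
      rintro _ ⟨u, hu, rfl⟩
      exact mul_pos hc (Real.sqrt_pos.mpr (lt_trans hu0 hu)))
    (by
      apply hg_int.mono_set
      rintro _ ⟨u, hu, rfl⟩
      have : Real.sqrt u0 ≤ Real.sqrt u := Real.sqrt_le_sqrt hu
      have h1 : f u0 ≤ c * Real.sqrt u := mul_le_mul_of_nonneg_left this hc.le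
      rw [hfu0] at h1
      exact h1)
    (by
      apply (hh_int.congr_fun _ measurableSet_Ici)
      intro u hu
      exact (heq u (lt_of_lt_of_le hu0 hu)).symm)
  rw [hfu0] at hcov
  rw [← hcov]
  rw [setIntegral_congr_fun measurableSet_Ioi (fun u hu => heq u (lt_trans hu0 hu))]
  rw [MeasureTheory.integral_const_mul]
  have hc2 : c ^ 2 = a ^ 2 * T ^ (2 / α) := by
    rw [hc_def, mul_pow, ← Real.rpow_natCast (T ^ (1/α)), ← Real.rpow_mul hT.le]
    congr 1
    push_cast
    ring
  rw [hc2]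
  ring

theorem stmt_5 (α T : ℝ) (hα : 2 < α) (hT : 0 < T)
    (K : ℕ) (hK : 1 ≤ K)
    (lam P w q p : Fin K → ℝ)
    (hlam : ∀ j, 0 < lam j) (hP : ∀ j, 0 < P j)
    (hw : ∀ j, w j = P j ^ (1 / α))
    (hq : ∀ j, q j = lam j * w j ^ 2 / ∑ k, lam k * w k ^ 2)
    (hp0 : ∀ j, 0 ≤ p j) (hp1 : ∀ j, p j ≤ 1)
    (i : Fin K) (r : ℝ) (hr : 0 < r) :
    ∑ j, 2 * π * p j * lam j *
        ∫ v in Set.Ioi (r * w j / w i),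
          (1 - 1 / (1 + T * (r * w j / w i) ^ α * v ^ (-α))) * v
      = π * r ^ 2 * (lam i / q i) * (∑ j, p j * q j) *
          (T ^ (2 / α) * ∫ u in Set.Ioi (T ^ (-2 / α)), 1 / (1 + u ^ (α / 2))) := by
  set ρ : ℝ := T ^ (2 / α) * ∫ u in Set.Ioi (T ^ (-2 / α)), 1 / (1 + u ^ (α / 2)) with hρ
  have hwpos : ∀ j, 0 < w j := fun j => (hw j) ▸ rpow_pos_of_pos (hP j) _
  have ha : ∀ j : Fin K, 0 < r * w j / w i :=
    fun j => div_pos (mul_pos hr (hwpos j)) (hwpos i)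
  have hstep : ∀ j : Fin K,
      2 * π * p j * lam j *
        ∫ v in Set.Ioi (r * w j / w i),
          (1 - 1 / (1 + T * (r * w j / w i) ^ α * v ^ (-α))) * v
      = π * r ^ 2 / w i ^ 2 * ρ * (p j * lam j * w j ^ 2) := by
    intro j
    rw [key_int α T hα hT (ha j), ← hρ]
    rw [div_pow, mul_pow]
    field_simp
  rw [Finset.sum_congr rfl (fun j _ => hstep j), ← Finset.mul_sum]
  have hS : 0 < ∑ k, lam k * w k ^ 2 :=
    Finset.sum_pos (fun k _ => mul_pos (hlam k) (pow_pos (hwpos k) 2))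
      (Finset.univ_nonempty_iff.mpr (by
        have : 0 < K := hK
        exact Fin.pos_iff_nonempty.mp this))
  have hqi : lam i / q i = (∑ k, lam k * w k ^ 2) / w i ^ 2 := by
    rw [hq i, div_div_eq_mul_div]
    exact mul_div_mul_left _ _ (hlam i).ne'
  have hsum : (∑ j, p j * q j) = (∑ j, p j * lam j * w j ^ 2) / (∑ k, lam k * w k ^ 2) := by
    rw [Finset.sum_div]
    refine Finset.sum_congr rfl (fun j _ => ?_)
    rw [hq j]
    ring
  rw [hqi, hsum]
  field_simp
end

section
/- Let K ≥ 1 be an integer, and for j = 1,…,K let λ_j > 0 and w_j > 0 be reals; set q_j := λ_j·w_j² / ∑_{k=1}^K λ_k·w_k². Fix an index i, nonnegative integers m_1,…,m_K, set n := 1 + ∑_{j=1}^K m_j, and let r ≥ 0. Then ∫_r^∞ exp(−π·λ_i·t²) · (2·(π·λ_i·t²)^{m_i+1})/(t·m_i!) · ∏_{j≠i} [ ((π·λ_j·(w_j/w_i)²·t²)^{m_j}/m_j!) · exp(−π·λ_j·(w_j/w_i)²·t²) ] dt = (n−1)! · (∏_{j=1}^K q_j^{m_j}/m_j!) · q_i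 · ∑_{k=0}^{n−1} exp(−π·λ_i·r²/q_i) · (π·λ_i·r²/q_i)^k / k!. -/
open Real MeasureTheory Filter

lemma sum_deriv (n : ℕ) (hn : 1 ≤ n) (x : ℝ) :
    HasDerivAt (fun x : ℝ => ∑ k ∈ Finset.range n, Real.exp (-x) * x ^ k / k.factorial)
      (-(Real.exp (-x) * x ^ (n - 1) / (n - 1).factorial)) x := by
  induction n, hn using Nat.le_induction with
  | base =>
    simp only [Finset.sum_range_one, pow_zero, Nat.factorial_zero, Nat.cast_one, mul_one,
      div_one, Nat.sub_self]
    simpa using ((hasDerivAt_neg x).exp)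
  | succ n hn ih =>
    have hpow : HasDerivAt (fun x : ℝ => Real.exp (-x) * x ^ n / n.factorial)
        ((-Real.exp (-x) * x ^ n + Real.exp (-x) * (n * x ^ (n - 1))) / n.factorial) x := by
      exact (((by simpa using (hasDerivAt_neg x).exp : HasDerivAt (fun x : ℝ => Real.exp (-x))
        (-Real.exp (-x)) x)).mul (hasDerivAt_pow n x)).div_const _
    have hsum := ih.add hpow
    have heq : (fun x : ℝ => ∑ k ∈ Finset.range (n + 1), Real.exp (-x) * x ^ k / k.factorial)
        = fun x : ℝ => (∑ k ∈ Finset.range n, Real.exp (-x) * x ^ k / k.factorial)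
          + Real.exp (-x) * x ^ n / n.factorial := by
      funext y; rw [Finset.sum_range_succ]
    rw [heq]
    refine hsum.congr_deriv ?_
    have hfac : (n.factorial : ℝ) = n * (n - 1).factorial := by
      rw_mod_cast [Nat.mul_factorial_pred (by omega)]
    have hx : x ^ n = x ^ (n - 1) * x := by
      rw [← pow_succ]; congr 1; omega
    have hfpos : ((n - 1).factorial : ℝ) ≠ 0 := by positivity
    have hnpos : (n : ℝ) ≠ 0 := by positivity
    simp only [Nat.add_sub_cancel]
    rw [hfac, hx]
    field_simp
    ring

lemma key_integral (c : ℝ) (hc : 0 < c) (n : ℕ) (hn : 1 ≤ n) (r : ℝ) (hr : 0 ≤ r) :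
    ∫ t in Set.Ioi r,
        2 * c * t * Real.exp (-(c * t ^ 2)) * (c * t ^ 2) ^ (n - 1) / (n - 1).factorial
      = ∑ k ∈ Finset.range n, Real.exp (-(c * r ^ 2)) * (c * r ^ 2) ^ k / k.factorial := by
  set g : ℝ → ℝ := fun t => -∑ k ∈ Finset.range n, Real.exp (-(c * t ^ 2)) * (c * t ^ 2) ^ k
      / k.factorial with hg
  have hderiv : ∀ t ∈ Set.Ioi r, HasDerivAt g
      (2 * c * t * Real.exp (-(c * t ^ 2)) * (c * t ^ 2) ^ (n - 1) / (n - 1).factorial) t := by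
    intro t _
    have hx : HasDerivAt (fun t : ℝ => c * t ^ 2) (c * (2 * t ^ 1)) t := by
      simpa using (hasDerivAt_pow 2 t).const_mul c
    have hcomp := ((sum_deriv n hn (c * t ^ 2)).comp t hx).neg
    refine hcomp.congr_deriv ?_
    ring
  have hcont : ContinuousWithinAt g (Set.Ici r) r := by
    apply Continuous.continuousWithinAt
    exact (continuous_finset_sum _ fun k _ => by fun_prop).neg
  have hpos : ∀ t ∈ Set.Ioi r,
      0 ≤ 2 * c * t * Real.exp (-(c * t ^ 2)) * (c * t ^ 2) ^ (n - 1) / (n - 1).factorial := by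
    intro t ht
    have ht' : 0 < t := lt_of_le_of_lt hr ht
    positivity
  have htend : Tendsto g atTop (nhds 0) := by
    rw [show (0 : ℝ) = -0 by ring]
    apply Tendsto.neg
    have : Tendsto (fun t : ℝ => c * t ^ 2) atTop atTop :=
      (tendsto_pow_atTop two_ne_zero).const_mul_atTop hc
    have h0 : Tendsto (fun t : ℝ => ∑ k ∈ Finset.range n,
        Real.exp (-(c * t ^ 2)) * (c * t ^ 2) ^ k / k.factorial) atTop
        (nhds (∑ k ∈ Finset.range n, (0 : ℝ))) := by
      apply tendsto_finset_sum
      intro k _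
      have := ((tendsto_pow_mul_exp_neg_atTop_nhds_zero k).div_const k.factorial).comp this
      simp only [Function.comp_def] at this
      convert this using 2 with t
      · ring
      · simp
    simpa using h0
  have := integral_Ioi_of_hasDerivAt_of_nonneg hcont hderiv hpos htend
  rw [this, hg]
  simp

theorem stmt_6 (K : ℕ) (hK : 1 ≤ K)
    (lam w q : Fin K → ℝ)
    (hlam : ∀ j, 0 < lam j) (hw : ∀ j, 0 < w j)
    (hq : ∀ j, q j = lam j * w j ^ 2 / ∑ k, lam k * w k ^ 2)
    (i : Fin K) (m : Fin K → ℕ) (n : ℕ) (hn : n = 1 + ∑ j, m j)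
    (r : ℝ) (hr : 0 ≤ r) :
    ∫ t in Set.Ioi r,
        Real.exp (-(π * lam i * t ^ 2)) *
            (2 * (π * lam i * t ^ 2) ^ (m i + 1)) / (t * (Nat.factorial (m i))) *
          ∏ j ∈ Finset.univ.erase i,
            ((π * lam j * (w j / w i) ^ 2 * t ^ 2) ^ (m j) / (Nat.factorial (m j)) *
              Real.exp (-(π * lam j * (w j / w i) ^ 2 * t ^ 2)))
      = (Nat.factorial (n - 1)) * (∏ j, q j ^ (m j) / (Nat.factorial (m j))) * q i *
          ∑ k ∈ Finset.range n,
            Real.exp (-(π * lam i * r ^ 2 / q i)) * (π * lam i * r ^ 2 / q i) ^ k /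
              (Nat.factorial k) := by
  have hS : 0 < ∑ k, lam k * w k ^ 2 := by
    apply Finset.sum_pos (fun j _ => mul_pos (hlam j) (pow_pos (hw j) 2))
    exact Finset.univ_nonempty_iff.mpr ⟨i⟩
  set S := ∑ k, lam k * w k ^ 2 with hSdef
  set c := π * S / w i ^ 2 with hcdef
  have hc : 0 < c := by have := hw i; positivity
  have hq' : ∀ j, 0 < q j := fun j => by rw [hq j]; exact div_pos (by have := hlam j; have := hw j; positivity) hS
  have hcq : ∀ j, π * lam j * (w j / w i) ^ 2 = c * q j := by
    intro j
    rw [hq j, hcdef]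
    have hwi := (hw i).ne'
    field_simp
  have hci : π * lam i = c * q i := by
    have := hcq i
    rwa [div_self (hw i).ne', one_pow, mul_one] at this
  have hsumq : ∑ j, q j = 1 := by
    simp only [hq, ← Finset.sum_div]
    exact div_self hS.ne'
  have hqe : ∑ j ∈ Finset.univ.erase i, q j = 1 - q i := by
    rw [Finset.sum_erase_eq_sub (Finset.mem_univ i), hsumq]
  set P := ∏ j ∈ Finset.univ.erase i, (q j) ^ (m j) / ((m j).factorial : ℝ) with hPdef
  set M := ∑ j ∈ Finset.univ.erase i, m j with hMdef
  have hnM : n - 1 = m i + M := by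
    have := Finset.add_sum_erase Finset.univ m (Finset.mem_univ i)
    omega
  have hn1 : 1 ≤ n := by omega
  set C := ((n - 1).factorial : ℝ) * (∏ j, q j ^ (m j) / ((m j).factorial : ℝ)) * q i with hCdef
  have hprodall : (∏ j, q j ^ (m j) / ((m j).factorial : ℝ))
      = (q i) ^ (m i) / ((m i).factorial : ℝ) * P :=
    (Finset.mul_prod_erase Finset.univ _ (Finset.mem_univ i)).symm
  have hEq : Set.EqOn
      (fun t => Real.exp (-(π * lam i * t ^ 2)) *
            (2 * (π * lam i * t ^ 2) ^ (m i + 1)) / (t * (Nat.factorial (m i))) *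
          ∏ j ∈ Finset.univ.erase i,
            ((π * lam j * (w j / w i) ^ 2 * t ^ 2) ^ (m j) / (Nat.factorial (m j)) *
              Real.exp (-(π * lam j * (w j / w i) ^ 2 * t ^ 2))))
      (fun t => C * (2 * c * t * Real.exp (-(c * t ^ 2)) * (c * t ^ 2) ^ (n - 1)
          / ((n - 1).factorial : ℝ)))
      (Set.Ioi r) := by
    intro t ht
    have ht0 : 0 < t := lt_of_le_of_lt hr ht
    simp only
    have hP : ∏ j ∈ Finset.univ.erase i,
        ((π * lam j * (w j / w i) ^ 2 * t ^ 2) ^ (m j) / ((m j).factorial : ℝ) *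
          Real.exp (-(π * lam j * (w j / w i) ^ 2 * t ^ 2)))
        = P * (c * t ^ 2) ^ M * Real.exp (-(c * t ^ 2 * (1 - q i))) := by
      have step1 : ∀ j ∈ Finset.univ.erase i,
          (π * lam j * (w j / w i) ^ 2 * t ^ 2) ^ (m j) / ((m j).factorial : ℝ) *
            Real.exp (-(π * lam j * (w j / w i) ^ 2 * t ^ 2))
          = (q j) ^ (m j) / ((m j).factorial : ℝ) * (c * t ^ 2) ^ (m j) *
            Real.exp (-(c * t ^ 2 * q j)) := by
        intro j _
        rw [hcq j, show c * q j * t ^ 2 = q j * (c * t ^ 2) by ring, mul_pow,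
          show -(q j * (c * t ^ 2)) = -(c * t ^ 2 * q j) by ring]
        ring
      rw [Finset.prod_congr rfl step1, Finset.prod_mul_distrib, Finset.prod_mul_distrib,
        Finset.prod_pow_eq_pow_sum, ← Real.exp_sum, ← hMdef]
      congr 2
      rw [← hqe, Finset.mul_sum, ← Finset.sum_neg_distrib]
    rw [hP, hci, hCdef, hprodall, hnM,
      show (c * q i * t ^ 2) ^ (m i + 1) = q i ^ (m i) * q i * ((c * t ^ 2) ^ (m i) * (c * t ^ 2))
        by rw [show c * q i * t ^ 2 = q i * (c * t ^ 2) by ring, mul_pow, pow_succ]; ring,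
      show (c * t ^ 2) ^ (m i + M) = (c * t ^ 2) ^ (m i) * (c * t ^ 2) ^ M from pow_add _ _ _]
    have hexp : Real.exp (-(c * q i * t ^ 2)) * Real.exp (-(c * t ^ 2 * (1 - q i)))
        = Real.exp (-(c * t ^ 2)) := by
      rw [← Real.exp_add]; congr 1; ring
    rw [← hexp]
    have hf1 : ((m i).factorial : ℝ) ≠ 0 := by positivity
    have hf2 : ((m i + M).factorial : ℝ) ≠ 0 := by positivity
    field_simp
  rw [MeasureTheory.setIntegral_congr_fun measurableSet_Ioi hEq,
    MeasureTheory.integral_const_mul, key_integral c hc n hn1 r hr]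
  have hcr : π * lam i * r ^ 2 / q i = c * r ^ 2 := by
    rw [hci]
    field_simp [(hq' i).ne']
  rw [hcr, hCdef]
end

section
/- Let Φ(x) := (2π)^{−1/2}·∫_{−∞}^x exp(−t²/2) dt denote the standard normal cumulative distribution function, let γ > 0 and ρ > 0, and define p̃_a(θ) := 1 − Φ((θ + 1/2 − γ)/√γ), p̃_1(θ) := 1 − Φ((θ − 1/2 − γ)/√γ), and P_c(θ) := (1 + p̃_1(θ)·ρ)/((1+ρ)·(1 + p̃_a(θ)·ρ)). Then for every θ ∈ ℝ, the derivative of P_c at θ is zero if and only if θ = γ·log( (1 + p̃_1(θ)·ρ)/(1 + p̃_a(θ)·ρ) ) + γ. -/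
open Real MeasureTheory

/-- The standard normal cumulative distribution function. -/
noncomputable def normCDF (x : ℝ) : ℝ :=
  (2 * π) ^ (-(1 : ℝ) / 2) * ∫ t in Set.Iic x, Real.exp (-t ^ 2 / 2)

/-- Continuity-corrected normal approximation of the base-station active probability. -/
noncomputable def pTildeA (γ θ : ℝ) : ℝ := 1 - normCDF ((θ + 1 / 2 - γ) / Real.sqrt γ)

/-- Continuity-corrected normal approximation of the nearest-connection probability. -/
noncomputable def pTildeOne (γ θ : ℝ) : ℝ := 1 - normCDF ((θ - 1 / 2 - γ) / Real.sqrt γ)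

lemma gauss_integrable : Integrable (fun t : ℝ => Real.exp (-t ^ 2 / 2)) := by
  have h : (fun t : ℝ => Real.exp (-t ^ 2 / 2)) = fun t : ℝ => Real.exp (-(1/2 : ℝ) * t ^ 2) := by
    funext t; ring_nf
  rw [h]
  exact integrable_exp_neg_mul_sq (by norm_num)

lemma C_pos : (0:ℝ) < (2 * π) ^ (-(1 : ℝ) / 2) :=
  Real.rpow_pos_of_pos (by positivity) _

lemma hasDerivAt_normCDF (x : ℝ) :
    HasDerivAt normCDF ((2 * π) ^ (-(1 : ℝ) / 2) * Real.exp (-x ^ 2 / 2)) x := by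
  have hint := gauss_integrable
  have key : normCDF = fun y =>
      (2 * π) ^ (-(1 : ℝ) / 2) *
        ((∫ t in Set.Iic (0:ℝ), Real.exp (-t ^ 2 / 2)) +
          ∫ t in (0:ℝ)..y, Real.exp (-t ^ 2 / 2)) := by
    funext y
    unfold normCDF
    congr 1
    rw [← intervalIntegral.integral_Iic_sub_Iic hint.integrableOn hint.integrableOn]
    ring
  have hcont : Continuous (fun t : ℝ => Real.exp (-t ^ 2 / 2)) := by continuity
  have hd : HasDerivAt (fun y => ∫ t in (0:ℝ)..y, Real.exp (-t ^ 2 / 2))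
      (Real.exp (-x ^ 2 / 2)) x := by
    exact intervalIntegral.integral_hasDerivAt_right hint.intervalIntegrable
      hcont.aestronglyMeasurable.stronglyMeasurableAtFilter hcont.continuousAt
  rw [key]
  simpa using (hd.const_add _).const_mul ((2 * π) ^ (-(1 : ℝ) / 2))

lemma normCDF_le_one (x : ℝ) : normCDF x ≤ 1 := by
  have h1 : (∫ t in Set.Iic x, Real.exp (-t ^ 2 / 2)) ≤ ∫ t : ℝ, Real.exp (-t ^ 2 / 2) :=
    setIntegral_le_integral gauss_integrable
      (Filter.Eventually.of_forall fun t => (Real.exp_pos _).le)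
  have h2 : (∫ t : ℝ, Real.exp (-t ^ 2 / 2)) = Real.sqrt (2 * π) := by
    have h : (fun t : ℝ => Real.exp (-t ^ 2 / 2)) = fun t : ℝ => Real.exp (-(1/2 : ℝ) * t ^ 2) := by
      funext t; ring_nf
    rw [h, integral_gaussian]
    norm_num [mul_comm]
  have h3 : (2 * π) ^ (-(1 : ℝ) / 2) * Real.sqrt (2 * π) = 1 := by
    rw [Real.sqrt_eq_rpow, ← Real.rpow_add (by positivity)]
    norm_num
  calc normCDF x ≤ (2 * π) ^ (-(1 : ℝ) / 2) * Real.sqrt (2 * π) := by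
        unfold normCDF
        rw [← h2]
        exact mul_le_mul_of_nonneg_left h1 C_pos.le
    _ = 1 := h3

theorem stmt_13 (γ ρ : ℝ) (hγ : 0 < γ) (hρ : 0 < ρ) :
    ∀ θ : ℝ,
      deriv (fun θ : ℝ =>
          (1 + pTildeOne γ θ * ρ) / ((1 + ρ) * (1 + pTildeA γ θ * ρ))) θ = 0 ↔
        θ = γ * Real.log ((1 + pTildeOne γ θ * ρ) / (1 + pTildeA γ θ * ρ)) + γ := by
  intro θ
  set s := Real.sqrt γ with hs
  have hspos : 0 < s := Real.sqrt_pos.mpr hγ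
  have hs2 : s ^ 2 = γ := Real.sq_sqrt hγ.le
  set x1 := (θ - 1 / 2 - γ) / s with hx1
  set xa := (θ + 1 / 2 - γ) / s with hxa
  set C := (2 * π) ^ (-(1 : ℝ) / 2) with hC
  have hCpos : 0 < C := C_pos
  have hinner1 : HasDerivAt (fun t : ℝ => (t - 1 / 2 - γ) / s) (1 / s) θ := by
    exact (((hasDerivAt_id θ).sub_const (1/2)).sub_const γ).div_const s
  have hinnera : HasDerivAt (fun t : ℝ => (t + 1 / 2 - γ) / s) (1 / s) θ := by
    exact (((hasDerivAt_id θ).add_const (1/2)).sub_const γ).div_const s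
  have hp1 : HasDerivAt (fun t => pTildeOne γ t) (-(C * Real.exp (-x1 ^ 2 / 2) * (1 / s))) θ := by
    unfold pTildeOne
    exact ((hasDerivAt_normCDF x1).comp θ hinner1).const_sub 1
  have hpa : HasDerivAt (fun t => pTildeA γ t) (-(C * Real.exp (-xa ^ 2 / 2) * (1 / s))) θ := by
    unfold pTildeA
    exact ((hasDerivAt_normCDF xa).comp θ hinnera).const_sub 1
  set A := 1 + pTildeOne γ θ * ρ with hA
  set B := 1 + pTildeA γ θ * ρ with hB
  have hApos : 0 < A := by
    have h := normCDF_le_one ((θ - 1 / 2 - γ) / s)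
    have : 0 ≤ pTildeOne γ θ := by unfold pTildeOne; linarith
    nlinarith
  have hBpos : 0 < B := by
    have h := normCDF_le_one ((θ + 1 / 2 - γ) / s)
    have : 0 ≤ pTildeA γ θ := by unfold pTildeA; linarith
    nlinarith
  have hDpos : 0 < (1 + ρ) * B := by nlinarith
  have hN : HasDerivAt (fun t => 1 + pTildeOne γ t * ρ)
      (-(C * Real.exp (-x1 ^ 2 / 2) * (1 / s)) * ρ) θ := (hp1.mul_const ρ).const_add 1
  have hD : HasDerivAt (fun t => (1 + ρ) * (1 + pTildeA γ t * ρ))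
      ((1 + ρ) * (-(C * Real.exp (-xa ^ 2 / 2) * (1 / s)) * ρ)) θ :=
    ((hpa.mul_const ρ).const_add 1).const_mul (1 + ρ)
  have hF := hN.div hD hDpos.ne'
  rw [show deriv (fun θ : ℝ => (1 + pTildeOne γ θ * ρ) / ((1 + ρ) * (1 + pTildeA γ θ * ρ))) θ = _ from hF.deriv, ← hA, ← hB, div_eq_zero_iff]
  have hD2 : ((1 + ρ) * B) ^ 2 ≠ 0 := by positivity
  have hnum : -(C * Real.exp (-x1 ^ 2 / 2) * (1 / s)) * ρ * ((1 + ρ) * B) -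
      A * ((1 + ρ) * (-(C * Real.exp (-xa ^ 2 / 2) * (1 / s)) * ρ)) =
      (C * ρ * (1 + ρ) * (1 / s)) * (Real.exp (-xa ^ 2 / 2) * A - Real.exp (-x1 ^ 2 / 2) * B) := by
    ring
  rw [hnum]
  have hc0 : (C * ρ * (1 + ρ) * (1 / s)) ≠ 0 := by positivity
  simp only [hD2, or_false, mul_eq_zero, hc0, false_or, sub_eq_zero]
  -- now: exp(-xa²/2) * A = exp(-x1²/2) * B ↔ θ = γ * log (A/B) + γ
  rw [← Real.log_injOn_pos.eq_iff (Set.mem_Ioi.mpr (by positivity))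
      (Set.mem_Ioi.mpr (by positivity)),
    Real.log_mul (Real.exp_ne_zero _) hApos.ne', Real.log_mul (Real.exp_ne_zero _) hBpos.ne',
    Real.log_exp, Real.log_exp, Real.log_div hApos.ne' hBpos.ne']
  have hxa2 : xa ^ 2 = (θ + 1 / 2 - γ) ^ 2 / γ := by rw [hxa, div_pow, hs2]
  have hx12 : x1 ^ 2 = (θ - 1 / 2 - γ) ^ 2 / γ := by rw [hx1, div_pow, hs2]
  rw [hxa2, hx12]
  constructor
  · intro h
    have h' : γ * Real.log A - γ * Real.log B = θ - γ := by
      field_simp at h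
      linarith
    linarith [mul_sub γ (Real.log A) (Real.log B)]
  · intro h
    have h' : γ * Real.log A - γ * Real.log B = θ - γ := by
      have := mul_sub γ (Real.log A) (Real.log B)
      linarith
    field_simp
    linarith
end

section
/- Let Φ(x) := (2π)^{−1/2}·∫_{−∞}^x exp(−t²/2) dt denote the standard normal cumulative distribution function. Let K ≥ 1, ρ > 0, and for j = 1,…,K let q_j > 0 with ∑_{j=1}^K q_j = 1 and γ̄_j > 0; define p̃_{a,j}(θ) := 1 − Φ((θ + 1/2 − γ̄_j)/√γ̄_j) and p̃_{1,j}(θ) := 1 − Φ((θ − 1/2 − γ̄_j)/√γ̄_j). Fix an index i and fix θ_j ∈ ℝ for all j ≠ i, and define f : ℝ → ℝ by f(θ_i) := (1 + ρ·∑_{j=1}^K q_j·p̃_{1,j}(θ_j)) / ((1+ρ)·(1 + ρ·∑_{j=1}^K q_j·p̃_{a,j}(θ_j))), regarded as a function of θ_i alone. Then for every θ_i ∈ ℝ, the derivative of f at θ_i is zero if and only if θ_i = γ̄_i·log( (1 + ρ·∑_{j=1}^K q_j·p̃_{1,j}(θ_j)) / (1 + ρ·∑_{j=1}^K q_j·p̃_{a,j}(θ_j))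 ) + γ̄_i. -/
open Real MeasureTheory

lemma gauss_eq : (fun t : ℝ => Real.exp (-t ^ 2 / 2)) = fun t => Real.exp (-(1/2) * t ^ 2) := by
  funext t; ring_nf

lemma gauss_continuous : Continuous (fun t : ℝ => Real.exp (-t ^ 2 / 2)) := by
  fun_prop

lemma pTildeA_nonneg (γ θ : ℝ) : 0 ≤ pTildeA γ θ := by
  simpa [pTildeA] using normCDF_le_one ((θ + 1 / 2 - γ) / Real.sqrt γ)

lemma pTildeOne_nonneg (γ θ : ℝ) : 0 ≤ pTildeOne γ θ := by
  simpa [pTildeOne] using normCDF_le_one ((θ - 1 / 2 - γ) / Real.sqrt γ)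

lemma hasDerivAt_pTildeOne (γ : ℝ) (x : ℝ) :
    HasDerivAt (pTildeOne γ)
      (-((2 * π) ^ (-(1 : ℝ) / 2) *
        Real.exp (-((x - 1 / 2 - γ) / Real.sqrt γ) ^ 2 / 2) * (1 / Real.sqrt γ))) x := by
  show HasDerivAt (fun y : ℝ => 1 - normCDF ((y - 1 / 2 - γ) / Real.sqrt γ)) _ x
  have hin : HasDerivAt (fun y : ℝ => (y - 1 / 2 - γ) / Real.sqrt γ) (1 / Real.sqrt γ) x := by
    exact (((hasDerivAt_id x).sub_const (1/2)).sub_const γ).div_const (Real.sqrt γ)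
  have := ((hasDerivAt_normCDF ((x - 1 / 2 - γ) / Real.sqrt γ)).comp x hin).const_sub 1
  simpa [Function.comp, mul_assoc] using this

lemma hasDerivAt_pTildeA (γ : ℝ) (x : ℝ) :
    HasDerivAt (pTildeA γ)
      (-((2 * π) ^ (-(1 : ℝ) / 2) *
        Real.exp (-((x + 1 / 2 - γ) / Real.sqrt γ) ^ 2 / 2) * (1 / Real.sqrt γ))) x := by
  show HasDerivAt (fun y : ℝ => 1 - normCDF ((y + 1 / 2 - γ) / Real.sqrt γ)) _ x
  have hin : HasDerivAt (fun y : ℝ => (y + 1 / 2 - γ) / Real.sqrt γ) (1 / Real.sqrt γ) x := by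
    exact (((hasDerivAt_id x).add_const (1/2)).sub_const γ).div_const (Real.sqrt γ)
  have := ((hasDerivAt_normCDF ((x + 1 / 2 - γ) / Real.sqrt γ)).comp x hin).const_sub 1
  simpa [Function.comp, mul_assoc] using this

theorem stmt_16 (K : ℕ) (hK : 1 ≤ K) (ρ : ℝ) (hρ : 0 < ρ)
    (q γbar : Fin K → ℝ)
    (hq0 : ∀ j, 0 < q j) (hq1 : ∑ j, q j = 1)
    (hγ : ∀ j, 0 < γbar j)
    (i : Fin K) (θ : Fin K → ℝ) :
    ∀ x : ℝ,
      deriv (fun y : ℝ =>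
          (1 + ρ * ∑ j, q j * pTildeOne (γbar j) (Function.update θ i y j)) /
            ((1 + ρ) *
              (1 + ρ * ∑ j, q j * pTildeA (γbar j) (Function.update θ i y j)))) x = 0 ↔
        x = γbar i *
              Real.log
                ((1 + ρ * ∑ j, q j * pTildeOne (γbar j) (Function.update θ i x j)) /
                  (1 + ρ * ∑ j, q j * pTildeA (γbar j) (Function.update θ i x j))) +
            γbar i := by
  intro x
  set c := (2 * π) ^ (-(1 : ℝ) / 2) with hc
  have hcpos : 0 < c := Real.rpow_pos_of_pos (by positivity) _
  set γ := γbar i with hγdef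
  have hγi : 0 < γ := hγ i
  have hs : 0 < Real.sqrt γ := Real.sqrt_pos.2 hγi
  have h1ρ : 0 < 1 + ρ := by linarith
  set E1 := Real.exp (-((x - 1 / 2 - γ) / Real.sqrt γ) ^ 2 / 2) with hE1
  set Ea := Real.exp (-((x + 1 / 2 - γ) / Real.sqrt γ) ^ 2 / 2) with hEa
  set N := 1 + ρ * ∑ j, q j * pTildeOne (γbar j) (Function.update θ i x j) with hN
  set D := 1 + ρ * ∑ j, q j * pTildeA (γbar j) (Function.update θ i x j) with hD
  have hNpos : 0 < N := by
    have h0 : (0:ℝ) ≤ ∑ j, q j * pTildeOne (γbar j) (Function.update θ i x j) :=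
      Finset.sum_nonneg fun j _ => mul_nonneg (hq0 j).le (pTildeOne_nonneg _ _)
    have := mul_nonneg hρ.le h0
    rw [hN]; linarith
  have hDpos : 0 < D := by
    have h0 : (0:ℝ) ≤ ∑ j, q j * pTildeA (γbar j) (Function.update θ i x j) :=
      Finset.sum_nonneg fun j _ => mul_nonneg (hq0 j).le (pTildeA_nonneg _ _)
    have := mul_nonneg hρ.le h0
    rw [hD]; linarith
  have hEapos : 0 < Ea := Real.exp_pos _
  -- derivative of the pTildeOne sum
  have hsum1 : HasDerivAt
      (fun y : ℝ => ∑ j, q j * pTildeOne (γbar j) (Function.update θ i y j))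
      (q i * (-(c * E1 * (1 / Real.sqrt γ)))) x := by
    have h : ∀ j ∈ Finset.univ, HasDerivAt
        (fun y : ℝ => q j * pTildeOne (γbar j) (Function.update θ i y j))
        (if j = i then q i * (-(c * E1 * (1 / Real.sqrt γ))) else 0) x := by
      intro j _
      by_cases hji : j = i
      · subst hji
        rw [if_pos rfl]
        simp only [Function.update_self]
        exact (hasDerivAt_pTildeOne (γbar j) x).const_mul (q j)
      · simp only [Function.update_of_ne hji, if_neg hji]
        exact hasDerivAt_const x _
    have := HasDerivAt.fun_sum h
    simpa using this
  have hsumA : HasDerivAt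
      (fun y : ℝ => ∑ j, q j * pTildeA (γbar j) (Function.update θ i y j))
      (q i * (-(c * Ea * (1 / Real.sqrt γ)))) x := by
    have h : ∀ j ∈ Finset.univ, HasDerivAt
        (fun y : ℝ => q j * pTildeA (γbar j) (Function.update θ i y j))
        (if j = i then q i * (-(c * Ea * (1 / Real.sqrt γ))) else 0) x := by
      intro j _
      by_cases hji : j = i
      · subst hji
        rw [if_pos rfl]
        simp only [Function.update_self]
        exact (hasDerivAt_pTildeA (γbar j) x).const_mul (q j)
      · simp only [Function.update_of_ne hji, if_neg hji]
        exact hasDerivAt_const x _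
    have := HasDerivAt.fun_sum h
    simpa using this
  have hNd : HasDerivAt
      (fun y : ℝ => 1 + ρ * ∑ j, q j * pTildeOne (γbar j) (Function.update θ i y j))
      (ρ * (q i * (-(c * E1 * (1 / Real.sqrt γ))))) x := (hsum1.const_mul ρ).const_add 1
  have hDd : HasDerivAt
      (fun y : ℝ => (1 + ρ) * (1 + ρ * ∑ j, q j * pTildeA (γbar j) (Function.update θ i y j)))
      ((1 + ρ) * (ρ * (q i * (-(c * Ea * (1 / Real.sqrt γ)))))) x :=
    ((hsumA.const_mul ρ).const_add 1).const_mul (1 + ρ)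
  have hf : HasDerivAt
      (fun y : ℝ =>
        (1 + ρ * ∑ j, q j * pTildeOne (γbar j) (Function.update θ i y j)) /
          ((1 + ρ) * (1 + ρ * ∑ j, q j * pTildeA (γbar j) (Function.update θ i y j))))
      ((ρ * (q i * (-(c * E1 * (1 / Real.sqrt γ)))) * ((1 + ρ) * D) -
        N * ((1 + ρ) * (ρ * (q i * (-(c * Ea * (1 / Real.sqrt γ))))))) / ((1 + ρ) * D) ^ 2) x :=
    hNd.div hDd (mul_ne_zero h1ρ.ne' hDpos.ne')
  rw [hf.deriv]
  rw [div_eq_zero_iff]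
  have hpow : ((1 + ρ) * D) ^ 2 ≠ 0 := pow_ne_zero _ (mul_ne_zero h1ρ.ne' hDpos.ne')
  have hnum : ρ * (q i * (-(c * E1 * (1 / Real.sqrt γ)))) * ((1 + ρ) * D) -
      N * ((1 + ρ) * (ρ * (q i * (-(c * Ea * (1 / Real.sqrt γ)))))) =
      ((1 + ρ) * ρ * q i * c * (1 / Real.sqrt γ)) * (Ea * N - E1 * D) := by ring
  have hk0 : 0 < (1 + ρ) * ρ * q i * c * (1 / Real.sqrt γ) :=
    mul_pos (mul_pos (mul_pos (mul_pos h1ρ hρ) (hq0 i)) hcpos) (by positivity)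
  have hk : ((1 + ρ) * ρ * q i * c * (1 / Real.sqrt γ)) ≠ 0 := hk0.ne'
  rw [hnum, mul_eq_zero, sub_eq_zero]
  have hE1Ea : E1 = Ea * Real.exp ((x - γ) / γ) := by
    rw [hE1, hEa, ← Real.exp_add]
    congr 1
    have hss : Real.sqrt γ ^ 2 = γ := Real.sq_sqrt hγi.le
    rw [div_pow, div_pow, hss]
    field_simp
    ring
  have hkey : Ea * N = E1 * D ↔ x = γ * Real.log (N / D) + γ := by
    rw [hE1Ea, mul_assoc, mul_right_inj' hEapos.ne']
    rw [show (N = Real.exp ((x - γ) / γ) * D) ↔ (Real.exp ((x - γ) / γ) = N / D) from by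
      rw [eq_div_iff hDpos.ne', eq_comm]]
    constructor
    · intro h
      have hl : Real.log (N / D) = (x - γ) / γ := by rw [← h, Real.log_exp]
      rw [hl]
      field_simp
      ring
    · intro h
      have hl : (x - γ) / γ = Real.log (N / D) := by
        rw [h]
        field_simp
        ring
      rw [hl, Real.exp_log (div_pos hNpos hDpos)]
  simp only [hpow, or_false, hk, false_or]
  exact hkey
end
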